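/- Let F : (Fin (2*d) → Fin n) → ℂ be a super-symmetric order-2d complex tensor and let matr(F) denote its square unfolding. Then rank(matr(F)) ≤ 1 if and only if there exists a vector b ∈ ℂ^n such that F(i) = Π_{k=1}^{2d} b(i_k) for all index tuples i. Equivalently, for super-symmetric even-order tensors the M-rank equals 1 if and only if the symmetric CP-rank equals 1. -/

import Mathlib

open Finset Module Submodule

section Stmt6Aux

variable {d n : ℕ}

private lemma stmt6_append_comp_left_swap (u v : Fin d → Fin n) (b b' : Fin d) :
    Fin.append u v ∘ ⇑(Equiv.swap (Fin.castAdd d b) (Fin.castAdd d b')) =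
      Fin.append (u ∘ ⇑(Equiv.swap b b')) v := by
  funext x
  refine Fin.addCases (fun i => ?_) (fun i => ?_) x
  · simp only [Function.comp_apply, (Fin.castAdd_injective d d).swap_apply,
      Fin.append_left]
  · have h1 : Fin.natAdd d i ≠ Fin.castAdd d b := by
      refine Fin.ne_of_val_ne ?_
      show d + (i : ℕ) ≠ (b : ℕ)
      have := b.is_lt; omega
    have h2 : Fin.natAdd d i ≠ Fin.castAdd d b' := by
      refine Fin.ne_of_val_ne ?_
      show d + (i : ℕ) ≠ (b' : ℕ)
      have := b'.is_lt; omega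
    simp only [Function.comp_apply, Equiv.swap_apply_of_ne_of_ne h1 h2, Fin.append_right]

private lemma stmt6_append_comp_cross_swap (u v : Fin d → Fin n) (b b' : Fin d) :
    Fin.append u v ∘ ⇑(Equiv.swap (Fin.castAdd d b) (Fin.natAdd d b')) =
      Fin.append (Function.update u b (v b')) (Function.update v b' (u b)) := by
  have hne : ∀ (i c : Fin d), Fin.castAdd d i ≠ Fin.natAdd d c := by
    intro i c
    refine Fin.ne_of_val_ne ?_
    show (i : ℕ) ≠ d + (c : ℕ)
    have := i.is_lt; omega
  funext x
  refine Fin.addCases (fun i => ?_) (fun i => ?_) x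
  · by_cases h : i = b
    · subst h
      simp only [Function.comp_apply, Equiv.swap_apply_left, Fin.append_right,
        Fin.append_left, Function.update_self]
    · have h1 : Fin.castAdd d i ≠ Fin.castAdd d b :=
        fun hc => h (Fin.castAdd_injective d d hc)
      simp only [Function.comp_apply, Equiv.swap_apply_of_ne_of_ne h1 (hne i b'),
        Fin.append_left, Function.update_of_ne h]
  · by_cases h : i = b'
    · subst h
      simp only [Function.comp_apply, Equiv.swap_apply_right, Fin.append_left,
        Fin.append_right, Function.update_self]
    · have h1 : Fin.natAdd d i ≠ Fin.castAdd d b := (hne b i).symm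
      have h2 : Fin.natAdd d i ≠ Fin.natAdd d b' := by
        intro hc
        have hv : d + (i : ℕ) = d + (b' : ℕ) := congrArg Fin.val hc
        exact h (Fin.ext (by omega))
      simp only [Function.comp_apply, Equiv.swap_apply_of_ne_of_ne h1 h2,
        Fin.append_right, Function.update_of_ne h]

private lemma stmt6_prod_rows_swap {m : ℕ} (f f' : Fin m → ℂ) {a a' : Fin m} (h : a ≠ a')
    (h1 : f a * f a' = f' a * f' a') (h2 : ∀ j, j ≠ a → j ≠ a' → f j = f' j) :
    ∏ j, f j = ∏ j, f' j := by
  have ha' : a' ∈ (univ : Finset (Fin m)).erase a := by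
    simp [Finset.mem_erase, h.symm]
  rw [← Finset.mul_prod_erase univ f (mem_univ a),
      ← Finset.mul_prod_erase _ f ha', ← mul_assoc, h1,
      ← Finset.mul_prod_erase univ f' (mem_univ a),
      ← Finset.mul_prod_erase _ f' ha', ← mul_assoc]
  congr 1
  refine Finset.prod_congr rfl fun j hj => ?_
  simp only [Finset.mem_erase] at hj
  exact h2 j hj.2.1 hj.1

private lemma stmt6_swap_pair_same {m : ℕ} (a : Fin m) (b b' k : Fin d) :
    Equiv.swap ((a, b) : Fin m × Fin d) (a, b') (a, k) = (a, Equiv.swap b b' k) := by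
  by_cases h1 : k = b
  · subst h1; simp
  by_cases h2 : k = b'
  · subst h2; simp
  · rw [Equiv.swap_apply_of_ne_of_ne (by simp [Prod.ext_iff, h1])
      (by simp [Prod.ext_iff, h2]), Equiv.swap_apply_of_ne_of_ne h1 h2]

private lemma stmt6_prod_single_swap_same (g : (Fin d → Fin n) → ℂ)
    (hswap : ∀ (b b' : Fin d) (u : Fin d → Fin n), g (u ∘ ⇑(Equiv.swap b b')) = g u)
    {m : ℕ} (a : Fin m) (b b' : Fin d) (W : Fin m × Fin d → Fin n) :
    ∏ j, g (fun k => W (Equiv.swap (a, b) (a, b') (j, k))) = ∏ j, g (fun k => W (j, k)) := by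
  refine Finset.prod_congr rfl fun j _ => ?_
  by_cases hj : j = a
  · subst hj
    have hfun : (fun k => W (Equiv.swap (j, b) (j, b') (j, k))) =
        (fun k => W (j, k)) ∘ ⇑(Equiv.swap b b') := by
      funext k
      simp only [Function.comp_apply, stmt6_swap_pair_same]
    rw [hfun, hswap]
  · have hfix : ∀ k, Equiv.swap ((a, b) : Fin m × Fin d) (a, b') (j, k) = (j, k) := fun k =>
      Equiv.swap_apply_of_ne_of_ne (by simp [Prod.ext_iff, hj]) (by simp [Prod.ext_iff, hj])
    simp only [hfix]

private lemma stmt6_prod_single_swap_cross (g : (Fin d → Fin n) → ℂ)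
    (hx : ∀ (u v : Fin d → Fin n) (b b' : Fin d),
      g u * g v = g (Function.update u b (v b')) * g (Function.update v b' (u b)))
    {m : ℕ} {a a' : Fin m} (ha : a ≠ a') (b b' : Fin d) (W : Fin m × Fin d → Fin n) :
    ∏ j, g (fun k => W (Equiv.swap (a, b) (a', b') (j, k))) = ∏ j, g (fun k => W (j, k)) := by
  refine stmt6_prod_rows_swap _ _ ha ?_ ?_
  · have hA : (fun k => W (Equiv.swap (a, b) (a', b') (a, k))) =
        Function.update (fun k => W (a, k)) b (W (a', b')) := by
      funext k
      rcases eq_or_ne k b with rfl | hkb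
      · simp [Equiv.swap_apply_left]
      · rw [Equiv.swap_apply_of_ne_of_ne (by simp [Prod.ext_iff, hkb])
            (by simp [Prod.ext_iff, ha]), Function.update_of_ne hkb]
    have hA' : (fun k => W (Equiv.swap (a, b) (a', b') (a', k))) =
        Function.update (fun k => W (a', k)) b' (W (a, b)) := by
      funext k
      rcases eq_or_ne k b' with rfl | hkb'
      · simp [Equiv.swap_apply_right]
      · rw [Equiv.swap_apply_of_ne_of_ne (by simp [Prod.ext_iff, Ne.symm ha])
            (by simp [Prod.ext_iff, hkb']), Function.update_of_ne hkb']
    rw [hA, hA']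
    exact (hx (fun k => W (a, k)) (fun k => W (a', k)) b b').symm
  · intro j hja hja'
    congr 1
    funext k
    congr 1
    exact Equiv.swap_apply_of_ne_of_ne (by simp [Prod.ext_iff, hja])
      (by simp [Prod.ext_iff, hja'])

private lemma stmt6_prod_single_swap (g : (Fin d → Fin n) → ℂ)
    (hswap : ∀ (b b' : Fin d) (u : Fin d → Fin n), g (u ∘ ⇑(Equiv.swap b b')) = g u)
    (hx : ∀ (u v : Fin d → Fin n) (b b' : Fin d),
      g u * g v = g (Function.update u b (v b')) * g (Function.update v b' (u b)))
    {m : ℕ} (p q : Fin m × Fin d) (W : Fin m × Fin d → Fin n) :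
    ∏ j, g (fun k => W (Equiv.swap p q (j, k))) = ∏ j, g (fun k => W (j, k)) := by
  obtain ⟨a, b⟩ := p
  obtain ⟨a', b'⟩ := q
  by_cases ha : a = a'
  · subst ha
    exact stmt6_prod_single_swap_same g hswap _ b b' W
  · exact stmt6_prod_single_swap_cross g hx ha b b' W

private lemma stmt6_prod_perm (g : (Fin d → Fin n) → ℂ)
    (hswap : ∀ (b b' : Fin d) (u : Fin d → Fin n), g (u ∘ ⇑(Equiv.swap b b')) = g u)
    (hx : ∀ (u v : Fin d → Fin n) (b b' : Fin d),
      g u * g v = g (Function.update u b (v b')) * g (Function.update v b' (u b)))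
    {m : ℕ} (σ : Equiv.Perm (Fin m × Fin d)) (W : Fin m × Fin d → Fin n) :
    ∏ j, g (fun k => W (σ (j, k))) = ∏ j, g (fun k => W (j, k)) := by
  refine Equiv.Perm.swap_induction_on
    (motive := fun σ => ∀ W : Fin m × Fin d → Fin n,
      ∏ j, g (fun k => W (σ (j, k))) = ∏ j, g (fun k => W (j, k)))
    σ (fun W => by simp) ?_ W
  intro f p q hpq IH W
  · have step1 : ∏ j, g (fun k => W ((Equiv.swap p q * f) (j, k))) =
        ∏ j, g (fun k => (W ∘ ⇑(Equiv.swap p q)) (j, k)) := by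
      have : ∀ j : Fin m, (fun k => W ((Equiv.swap p q * f) (j, k))) =
          fun k => (W ∘ ⇑(Equiv.swap p q)) (f (j, k)) := by
        intro j; funext k; simp [Equiv.Perm.mul_apply]
      simp only [this]
      exact IH (W ∘ ⇑(Equiv.swap p q))
    rw [step1]
    exact stmt6_prod_single_swap g hswap hx p q W

end Stmt6Aux

/-- For a super-symmetric order-`2d` tensor `F`, the square unfolding `matr(F)` has rank at
most `1` if and only if `F(i) = ∏_k b(i_k)` for some vector `b`; i.e., for super-symmetric
even-order tensors the M-rank equals one iff the symmetric CP-rank equals one. -/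
theorem stmt_6 {d n : ℕ} (hd : 0 < d)
    (F : (Fin (d + d) → Fin n) → ℂ)
    (hsym : ∀ σ : Equiv.Perm (Fin (d + d)), ∀ w : Fin (d + d) → Fin n, F (w ∘ ⇑σ) = F w) :
    (Matrix.of fun u v : Fin d → Fin n => F (Fin.append u v)).rank ≤ 1 ↔
      ∃ b : Fin n → ℂ, ∀ w : Fin (d + d) → Fin n, F w = ∏ k, b (w k) := by
  set M : Matrix (Fin d → Fin n) (Fin d → Fin n) ℂ :=
    Matrix.of fun u v : Fin d → Fin n => F (Fin.append u v) with hMdef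
  have happend : ∀ w : Fin (d + d) → Fin n,
      Fin.append (fun i => w (Fin.castAdd d i)) (fun i => w (Fin.natAdd d i)) = w :=
    fun w => Fin.append_castAdd_natAdd
  constructor
  · intro hrank
    -- extract a rank-one factorization of the unfolding matrix
    obtain ⟨P, Q, hPQ⟩ : ∃ P Q : (Fin d → Fin n) → ℂ,
        ∀ u v, F (Fin.append u v) = P u * Q v := by
      have h1 : finrank ℂ (LinearMap.range M.mulVecLin) ≤ 1 := hrank
      rw [finrank_le_one_iff] at h1
      obtain ⟨v0, hv0⟩ := h1
      have hcol : ∀ v : Fin d → Fin n, ∃ c : ℂ,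
          ∀ u, F (Fin.append u v) = (v0 : (Fin d → Fin n) → ℂ) u * c := by
        intro v
        have hmem : M.mulVec (Pi.single v 1) ∈ LinearMap.range M.mulVecLin :=
          ⟨Pi.single v 1, rfl⟩
        obtain ⟨c, hc⟩ := hv0 ⟨_, hmem⟩
        refine ⟨c, fun u => ?_⟩
        have h2 := congrFun (congrArg Subtype.val hc) u
        have h3 : M.mulVec (Pi.single v 1) u = M u v := by
          simp [Matrix.mulVec_single]
        simp only [SetLike.val_smul, Pi.smul_apply, smul_eq_mul] at h2
        have h4 : F (Fin.append u v) = M u v := rfl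
        rw [h4, ← h3, ← h2, mul_comm]
      choose Q hQ using hcol
      exact ⟨(v0 : (Fin d → Fin n) → ℂ), Q, fun u v => hQ v u⟩
    by_cases hz : ∃ u v : Fin d → Fin n, P u * Q v ≠ 0
    · obtain ⟨u₀, v₀, h0⟩ := hz
      -- symmetry of the unfolding
      have hMsymm : ∀ u v : Fin d → Fin n, F (Fin.append u v) = F (Fin.append v u) := by
        intro u v
        have hflip : Fin.append v u ∘ ⇑(finAddFlip : Fin (d + d) ≃ Fin (d + d)) =
            Fin.append u v := by
          funext x
          refine Fin.addCases (fun i => ?_) (fun i => ?_) x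
          · simp only [Function.comp_apply, finAddFlip_apply_castAdd,
              Fin.append_left, Fin.append_right]
          · simp only [Function.comp_apply, finAddFlip_apply_natAdd,
              Fin.append_left, Fin.append_right]
        rw [← hflip, hsym]
      have hP0 : P u₀ ≠ 0 := fun h => h0 (by simp [h])
      have hQ0 : Q v₀ ≠ 0 := fun h => h0 (by simp [h])
      have hPv0 : P v₀ ≠ 0 := by
        intro h
        have := hMsymm u₀ v₀
        rw [hPQ, hPQ, h, zero_mul] at this
        exact h0 this
      set t : ℂ := Q v₀ / P v₀ with ht
      have ht0 : t ≠ 0 := div_ne_zero hQ0 hPv0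
      have hQt : ∀ u, Q u = t * P u := by
        intro u
        have h1 := hMsymm u v₀
        rw [hPQ, hPQ] at h1
        rw [ht, div_mul_eq_mul_div, eq_div_iff hPv0]
        linear_combination -h1
      obtain ⟨s, hs⟩ := IsAlgClosed.exists_pow_nat_eq t (n := 2) (by norm_num)
      set g : (Fin d → Fin n) → ℂ := fun u => s * P u with hg
      have hMg : ∀ u v, F (Fin.append u v) = g u * g v := by
        intro u v
        rw [hPQ, hQt, hg]
        simp only []
        have : s * P u * (s * P v) = s ^ 2 * (P u * P v) := by ring
        rw [this, hs]
        ring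
      have hs0 : s ≠ 0 := by
        intro h
        rw [h] at hs
        exact ht0 (by simpa using hs.symm)
      have hg0 : g u₀ ≠ 0 := mul_ne_zero hs0 hP0
      -- single-factor swap invariance for g
      have hswap : ∀ (b b' : Fin d) (u : Fin d → Fin n),
          g (u ∘ ⇑(Equiv.swap b b')) = g u := by
        intro b b' u
        have h1 : g (u ∘ ⇑(Equiv.swap b b')) * g u₀ = g u * g u₀ := by
          rw [← hMg, ← hMg, ← stmt6_append_comp_left_swap u u₀ b b', hsym]
        exact mul_right_cancel₀ hg0 h1
      -- cross exchange for g
      have hx : ∀ (u v : Fin d → Fin n) (b b' : Fin d),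
          g u * g v = g (Function.update u b (v b')) * g (Function.update v b' (u b)) := by
        intro u v b b'
        rw [← hMg, ← hMg, ← stmt6_append_comp_cross_swap u v b b', hsym]
      set j₀ : Fin d := ⟨0, hd⟩ with hj₀
      -- diagonal nonvanishing: some constant tuple has nonzero g-value
      have hdiag : ∀ j : Fin d, g (fun _ => u₀ j) ≠ 0 := by
        have h1 := stmt6_prod_perm g hswap hx (Equiv.prodComm (Fin d) (Fin d)) (fun p => u₀ p.2)
        have h2 : ∏ j : Fin d, g (fun _ => u₀ j) = g u₀ ^ d := by
          have e2 : (∏ _j : Fin d, g u₀) = g u₀ ^ d := by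
            rw [Finset.prod_const, Finset.card_univ, Fintype.card_fin]
          exact h1.trans e2
        intro j hj
        have : (∏ j : Fin d, g (fun _ => u₀ j)) ≠ 0 := by
          rw [h2]; exact pow_ne_zero d hg0
        exact this (Finset.prod_eq_zero (mem_univ j) hj)
      set a : Fin n := u₀ j₀ with ha
      set β : Fin n → ℂ := fun x => g (fun k => if k = j₀ then x else a) with hβ
      set D : ℂ := g (fun _ => a) with hD
      have hD0 : D ≠ 0 := hdiag j₀
      set e : ℕ := ((univ : Finset (Fin d)).erase j₀).card with he
      -- main identity: g u * D ^ e = ∏ j, β (u j)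
      have hmain : ∀ u : Fin d → Fin n, g u * D ^ e = ∏ j, β (u j) := by
        intro u
        have h1 := stmt6_prod_perm g hswap hx (Equiv.prodComm (Fin d) (Fin d))
          (fun p => if p.2 = j₀ then u p.1 else a)
        have hrhs : ∏ j : Fin d, g (fun k =>
            (fun p : Fin d × Fin d => if p.2 = j₀ then u p.1 else a) (j, k)) =
            ∏ j, β (u j) := rfl
        have hlhs : ∏ j : Fin d, g (fun k =>
            (fun p : Fin d × Fin d => if p.2 = j₀ then u p.1 else a)
              ((Equiv.prodComm (Fin d) (Fin d)) (j, k))) = g u * D ^ e := by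
          simp only [Equiv.prodComm_apply, Prod.swap_prod_mk]
          have hfactor : ∀ j : Fin d, g (fun k => if j = j₀ then u k else a) =
              if j = j₀ then g u else D := by
            intro j
            by_cases hj : j = j₀ <;> simp [hj, hD]
          show ∏ j : Fin d, g (fun k => if j = j₀ then u k else a) = g u * D ^ e
          rw [Finset.prod_congr rfl fun j _ => hfactor j,
            ← Finset.mul_prod_erase univ _ (mem_univ j₀)]
          simp only [if_pos rfl]
          congr 1
          rw [Finset.prod_congr rfl (fun j hj => if_neg (Finset.mem_erase.mp hj).1),
            Finset.prod_const, he]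
        rw [← hrhs, ← h1, hlhs]
      -- assemble the vector b
      obtain ⟨r, hr⟩ := IsAlgClosed.exists_pow_nat_eq ((D ^ e)⁻¹ ^ 2) (n := d + d)
        (by omega)
      refine ⟨fun x => r * β x, fun w => ?_⟩
      set u1 : Fin d → Fin n := fun i => w (Fin.castAdd d i) with hu1
      set u2 : Fin d → Fin n := fun i => w (Fin.natAdd d i) with hu2
      have hw : F w = g u1 * g u2 := by rw [← happend w, hMg]
      have hsplit : ∏ k : Fin (d + d), β (w k) = (∏ j, β (u1 j)) * ∏ j, β (u2 j) := by
        rw [Fin.prod_univ_add (fun k : Fin (d + d) => β (w k))]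
      calc F w = g u1 * g u2 := hw
        _ = ((D ^ e)⁻¹ ^ 2) * ((g u1 * D ^ e) * (g u2 * D ^ e)) := by
            field_simp
        _ = ((D ^ e)⁻¹ ^ 2) * ((∏ j, β (u1 j)) * ∏ j, β (u2 j)) := by
            rw [hmain u1, hmain u2]
        _ = ((D ^ e)⁻¹ ^ 2) * ∏ k : Fin (d + d), β (w k) := by rw [hsplit]
        _ = ∏ k : Fin (d + d), (r * β (w k)) := by
            conv_rhs => rw [Finset.prod_mul_distrib, Finset.prod_const, Finset.card_univ,
              Fintype.card_fin, hr]
    · push_neg at hz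
      refine ⟨0, fun w => ?_⟩
      have h1 : F w = 0 := by
        rw [← happend w, hPQ, hz]
      rw [h1]
      symm
      simp only [Pi.zero_apply]
      rw [Finset.prod_const, Finset.card_univ, Fintype.card_fin]
      exact zero_pow (by omega)
  · rintro ⟨b, hb⟩
    set P : (Fin d → Fin n) → ℂ := fun u => ∏ k, b (u k) with hP
    have hPQ : ∀ u v : Fin d → Fin n, M u v = P u * P v := by
      intro u v
      have h1 : M u v = F (Fin.append u v) := rfl
      rw [h1, hb, Fin.prod_univ_add (fun k : Fin (d + d) => b (Fin.append u v k))]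
      congr 1
      · exact Finset.prod_congr rfl fun k _ => by rw [Fin.append_left]
      · exact Finset.prod_congr rfl fun k _ => by rw [Fin.append_right]
    have hle : LinearMap.range M.mulVecLin ≤ span ℂ {P} := by
      rintro x ⟨y, rfl⟩
      rw [Submodule.mem_span_singleton]
      refine ⟨∑ v, P v * y v, ?_⟩
      funext u
      simp only [Matrix.mulVecLin_apply, Matrix.mulVec, dotProduct, Pi.smul_apply,
        smul_eq_mul]
      rw [Finset.sum_mul]
      refine Finset.sum_congr rfl fun v _ => ?_
      show P v * y v * P u = M u v * y v
      rw [hPQ]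
      ring
    have hspan : finrank ℂ (span ℂ ({P} : Set ((Fin d → Fin n) → ℂ))) ≤ 1 := by
      refine finrank_le_one ⟨P, Submodule.mem_span_singleton_self P⟩ ?_
      rintro ⟨w, hw⟩
      obtain ⟨c, hc⟩ := Submodule.mem_span_singleton.mp hw
      exact ⟨c, Subtype.ext (by simpa using hc)⟩
    calc M.rank = finrank ℂ (LinearMap.range M.mulVecLin) := rfl
      _ ≤ finrank ℂ (span ℂ ({P} : Set ((Fin d → Fin n) → ℂ))) :=
          Submodule.finrank_mono hle
      _ ≤ 1 := hspan
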